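/- PALM sufficient decrease: under the block structure φ(x) = f(x₁,…,x_p) + Σⱼ gⱼ(xⱼ) with each partial function xⱼ ↦ f(…,xⱼ,…) having Lⱼ-Lipschitz gradient and each gⱼ proper lsc convex, the PALM iterates satisfy φ(x^{(t)}) − φ(x^{(t+1)}) ≥ (L_min/2)·‖x^{(t)} − x^{(t+1)}‖², where L_min = minⱼ Lⱼ. -/

import Mathlib

open scoped RealInnerProductSpace


theorem palm_descent {E : Type*} [NormedAddCommGroup E] [InnerProductSpace ℝ E] [CompleteSpace E]
    (F : E → ℝ) (G : E → E) (L : ℝ)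
    (hG : ∀ x, HasGradientAt F (G x) x)
    (hLip : ∀ a b, ‖G a - G b‖ ≤ L * ‖a - b‖) (x y : E) :
    F y ≤ F x + ⟪G x, y - x⟫ + L / 2 * ‖y - x‖ ^ 2 := by
  set Δ := y - x with hΔ
  set c₁ := ⟪G x, Δ⟫ with hc₁
  set c₂ := L / 2 * ‖Δ‖ ^ 2 with hc₂
  set q : ℝ → ℝ := fun s => F (x + s • Δ) - s * c₁ - s ^ 2 * c₂ with hq
  have hderiv : ∀ s : ℝ, HasDerivAt q (⟪G (x + s • Δ), Δ⟫ - c₁ - 2 * s * c₂) s := by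
    intro s
    have h1 : HasDerivAt (fun s : ℝ => x + s • Δ) Δ s := by
      simpa using ((hasDerivAt_id s).smul_const Δ).const_add x
    have h2 : HasDerivAt (fun s : ℝ => F (x + s • Δ)) (⟪G (x + s • Δ), Δ⟫) s := by
      have := (hG (x + s • Δ)).hasFDerivAt.comp_hasDerivAt s h1
      simp only [InnerProductSpace.toDual_apply_apply] at this
      exact this
    have h3 : HasDerivAt (fun s : ℝ => s * c₁) c₁ s := by
      simpa using (hasDerivAt_id s).mul_const c₁
    have h4 : HasDerivAt (fun s : ℝ => s ^ 2 * c₂) (2 * s * c₂) s := by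
      have := ((hasDerivAt_pow 2 s)).mul_const c₂
      simpa [mul_comm] using this
    exact (h2.sub h3).sub h4
  have hq10 : q 1 ≤ q 0 := by
    have hcont : ContinuousOn q (Set.Icc 0 1) :=
      (fun s _ => ((hderiv s).differentiableAt.continuousAt.continuousWithinAt))
    have hdiff : ∀ s ∈ interior (Set.Icc (0:ℝ) 1), DifferentiableAt ℝ q s :=
      fun s _ => (hderiv s).differentiableAt
    have hnonpos : ∀ s ∈ interior (Set.Icc (0:ℝ) 1), deriv q s ≤ 0 := by
      intro s hs
      rw [interior_Icc] at hs
      rw [(hderiv s).deriv]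
      have hinner : ⟪G (x + s • Δ), Δ⟫ - c₁ = ⟪G (x + s • Δ) - G x, Δ⟫ := by
        rw [inner_sub_left]
      have hb : ⟪G (x + s • Δ) - G x, Δ⟫ ≤ L * s * ‖Δ‖ ^ 2 := by
        calc ⟪G (x + s • Δ) - G x, Δ⟫ ≤ ‖G (x + s • Δ) - G x‖ * ‖Δ‖ :=
              real_inner_le_norm _ _
          _ ≤ (L * ‖(x + s • Δ) - x‖) * ‖Δ‖ := by
              apply mul_le_mul_of_nonneg_right (hLip _ _) (norm_nonneg _)
          _ = L * s * ‖Δ‖ ^ 2 := by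
              rw [add_sub_cancel_left, norm_smul, Real.norm_eq_abs,
                abs_of_pos hs.1]; ring
      rw [hinner]
      have : 2 * s * c₂ = L * s * ‖Δ‖ ^ 2 := by rw [hc₂]; ring
      linarith [hb, this.ge]
    have := antitoneOn_of_deriv_nonpos (convex_Icc (0:ℝ) 1) hcont
      (fun s hs => (hdiff s hs).differentiableWithinAt) hnonpos
    exact this (Set.left_mem_Icc.2 zero_le_one) (Set.right_mem_Icc.2 zero_le_one) zero_le_one
  have e1 : q 1 = F y - c₁ - c₂ := by simp [hq, hΔ]
  have e0 : q 0 = F x := by simp [hq]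
  rw [e1, e0] at hq10
  linarith

theorem palm_opt {E : Type*} [NormedAddCommGroup E] [InnerProductSpace ℝ E] [CompleteSpace E]
    (g : E → ℝ) (hg : ConvexOn ℝ Set.univ g) (v : E) (L : ℝ) (hL : 0 < L) (x0 xs : E)
    (hmin : ∀ ξ, ⟪xs - x0, v⟫ + L / 2 * ‖xs - x0‖ ^ 2 + g xs
      ≤ ⟪ξ - x0, v⟫ + L / 2 * ‖ξ - x0‖ ^ 2 + g ξ) :
    ⟪xs - x0, v⟫ + L * ‖xs - x0‖ ^ 2 + g xs ≤ g x0 := by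
  set Δ := xs - x0 with hΔ
  set D := ‖Δ‖ ^ 2 with hD
  have hD0 : 0 ≤ D := sq_nonneg _
  have key : ∀ θ : ℝ, 0 < θ → θ ≤ 1 →
      ⟪Δ, v⟫ + L / 2 * (2 - θ) * D + g xs ≤ g x0 := by
    intro θ hθ0 hθ1
    have hξ : xs + θ • (x0 - xs) = θ • x0 + (1 - θ) • xs := by
      rw [smul_sub, sub_smul, one_smul]; abel
    have hgc : g (xs + θ • (x0 - xs)) ≤ θ * g x0 + (1 - θ) * g xs := by
      rw [hξ]
      exact hg.2 (Set.mem_univ x0) (Set.mem_univ xs) hθ0.le (by linarith) (by ring)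
    have hsub : (xs + θ • (x0 - xs)) - x0 = (1 - θ) • Δ := by
      rw [hΔ, smul_sub, sub_smul, one_smul]
      module
    have h := hmin (xs + θ • (x0 - xs))
    rw [hsub] at h
    have hi : ⟪(1 - θ) • Δ, v⟫ = (1 - θ) * ⟪Δ, v⟫ := real_inner_smul_left _ _ _
    have hn : ‖(1 - θ) • Δ‖ ^ 2 = (1 - θ) ^ 2 * D := by
      rw [norm_smul, Real.norm_eq_abs, abs_of_nonneg (by linarith : (0:ℝ) ≤ 1 - θ),
        mul_pow, hD]
    rw [hi, hn] at h
    have h2 : θ * (⟪Δ, v⟫ + L / 2 * (2 - θ) * D + g xs) ≤ θ * g x0 := by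
      nlinarith [h, hgc]
    exact le_of_mul_le_mul_left (by linarith [h2]) hθ0
  apply le_of_forall_pos_le_add
  intro ε hε
  set θ := min 1 (ε / (L / 2 * D + 1)) with hθ
  have hden : 0 < L / 2 * D + 1 := by nlinarith
  have hθ0 : 0 < θ := lt_min one_pos (div_pos hε hden)
  have hθ1 : θ ≤ 1 := min_le_left _ _
  have hk := key θ hθ0 hθ1
  have hbound : L / 2 * θ * D ≤ ε := by
    have h1 : θ ≤ ε / (L / 2 * D + 1) := min_le_right _ _
    have h2 : θ * (L / 2 * D + 1) ≤ ε := by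
      rw [← le_div_iff₀ hden] at *
      exact h1
    nlinarith
  nlinarith [hk, hbound]


theorem palm_partial_grad {ι : Type*} [Fintype ι] [DecidableEq ι] (β : ι → Type*)
    [∀ i, NormedAddCommGroup (β i)] [∀ i, InnerProductSpace ℝ (β i)]
    [∀ i, FiniteDimensional ℝ (β i)]
    (f : PiLp 2 β → ℝ) (Y : PiLp 2 β) (j : ι) (v : PiLp 2 β) (a : β j)
    (hf : HasGradientAt f v (WithLp.toLp 2 (Function.update Y j a))) :
    HasGradientAt (fun b => f (WithLp.toLp 2 (Function.update Y j b))) (v j) a := by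
  classical
  let S : β j →L[ℝ] PiLp 2 β :=
    (PiLp.continuousLinearEquiv 2 ℝ β).symm.toContinuousLinearMap.comp
      (LinearMap.single ℝ β j).toContinuousLinearMap
  let U : β j → PiLp 2 β := fun b => WithLp.toLp 2 (Function.update Y j b)
  have hSapp : ∀ (b : β j) (i : ι), S b i = Pi.single j b i := by
    intro b i
    rfl
  have hupd : ∀ b : β j, U b = Y + S (b - Y j) := by
    intro b
    ext i
    have h0 : (Y + S (b - Y j)) i = Y i + S (b - Y j) i := rfl
    rw [h0, hSapp]
    by_cases h : i = j
    · subst h; simp [U]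
    · simp [U, Function.update_of_ne h, Pi.single_eq_of_ne h]
  have hι : HasFDerivAt U S a := by
    have h1 : HasFDerivAt (fun b : β j => b - Y j) (ContinuousLinearMap.id ℝ (β j)) a :=
      (hasFDerivAt_id a).sub_const (Y j)
    have h2 : HasFDerivAt (fun b : β j => Y + S (b - Y j)) S a := by
      simpa using (S.hasFDerivAt.comp a h1).const_add Y
    simpa only [← hupd] using h2
  have hcomp : HasFDerivAt (fun b => f (U b))
      ((InnerProductSpace.toDual ℝ (PiLp 2 β) v).comp S) a := by
    have h3 : U a = WithLp.toLp 2 (Function.update Y j a) := rfl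
    exact (h3 ▸ hf.hasFDerivAt).comp a hι
  have heq : (InnerProductSpace.toDual ℝ (PiLp 2 β) v).comp S
      = InnerProductSpace.toDual ℝ (β j) (v j) := by
    apply ContinuousLinearMap.ext
    intro b
    simp only [ContinuousLinearMap.comp_apply, InnerProductSpace.toDual_apply_apply]
    rw [PiLp.inner_apply]
    rw [Finset.sum_eq_single j]
    · rw [hSapp]; simp
    · intro i _ hij
      rw [hSapp, Pi.single_eq_of_ne hij, inner_zero_right]
    · intro h; exact absurd (Finset.mem_univ j) h
  rw [hasGradientAt_iff_hasFDerivAt]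
  rw [← heq]
  exact hcomp

/-- PALM sufficient decrease. For `φ(x) = f(x₁,…,x_p) + Σⱼ gⱼ(xⱼ)` with
each partial function of `f` having an `Lⱼ`-Lipschitz partial gradient and each `gⱼ`
convex lsc, the PALM iterates satisfy
`φ(x^{(t)}) − φ(x^{(t+1)}) ≥ (L_min/2)·‖x^{(t)} − x^{(t+1)}‖²`. -/
theorem stmt15 {p : ℕ} [NeZero p] {d : Fin p → ℕ}
    (f : PiLp 2 (fun j : Fin p => EuclideanSpace ℝ (Fin (d j))) → ℝ)
    (Df : PiLp 2 (fun j : Fin p => EuclideanSpace ℝ (Fin (d j))) →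
      PiLp 2 (fun j : Fin p => EuclideanSpace ℝ (Fin (d j))))
    (hDf : ∀ x, HasGradientAt f (Df x) x)
    (hfconv : ConvexOn ℝ Set.univ f)
    (g : (j : Fin p) → EuclideanSpace ℝ (Fin (d j)) → ℝ)
    (hgconv : ∀ j, ConvexOn ℝ Set.univ (g j))
    (hglsc : ∀ j, LowerSemicontinuous (g j))
    (Lc : Fin p → ℝ) (hLc : ∀ j, 0 < Lc j)
    (hpartialLip : ∀ (j : Fin p) (x : PiLp 2 (fun j : Fin p => EuclideanSpace ℝ (Fin (d j))))
      (a b : EuclideanSpace ℝ (Fin (d j))),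
      ‖Df (WithLp.toLp 2 (Function.update x j a)) j - Df (WithLp.toLp 2 (Function.update x j b)) j‖ ≤ Lc j * ‖a - b‖)
    (X : ℕ → PiLp 2 (fun j : Fin p => EuclideanSpace ℝ (Fin (d j))))
    (H : ℕ → Fin p → PiLp 2 (fun j : Fin p => EuclideanSpace ℝ (Fin (d j))))
    (hH : ∀ t (j i : Fin p),
      H t j i = if (i : ℕ) < (j : ℕ) then X (t+1) i else X t i)
    (hupdate : ∀ t (j : Fin p), ∀ ξ : EuclideanSpace ℝ (Fin (d j)),
      ⟪X (t+1) j - X t j, Df (H t j) j⟫ + (Lc j / 2) * ‖X (t+1) j - X t j‖^2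
          + g j (X (t+1) j)
        ≤ ⟪ξ - X t j, Df (H t j) j⟫ + (Lc j / 2) * ‖ξ - X t j‖^2 + g j ξ) :
    ∀ t, (Finset.univ.inf' Finset.univ_nonempty Lc / 2) * ‖X t - X (t+1)‖^2
      ≤ (f (X t) + ∑ j, g j (X t j)) - (f (X (t+1)) + ∑ j, g j (X (t+1) j)) := by
  classical
  intro t
  set Lmin := Finset.univ.inf' Finset.univ_nonempty Lc with hLmin
  set Y : ℕ → PiLp 2 (fun j : Fin p => EuclideanSpace ℝ (Fin (d j))) :=
    fun n => WithLp.toLp 2 (fun i => if (i : ℕ) < n then X (t+1) i else X t i) with hY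
  have hY0 : Y 0 = X t := by
    ext i; simp [hY]
  have hYp : Y p = X (t+1) := by
    ext i; simp [hY, i.isLt]
  have main : ∀ n, n ≤ p →
      f (Y n) + ∑ j, g j (Y n j)
        + ∑ j ∈ Finset.univ.filter (fun j : Fin p => (j : ℕ) < n),
            (Lc j / 2) * ‖X (t+1) j - X t j‖ ^ 2
      ≤ f (X t) + ∑ j, g j (X t j) := by
    intro n
    induction n with
    | zero =>
      intro _
      have hfil : Finset.univ.filter (fun j : Fin p => (j : ℕ) < 0) = ∅ := by
        simp
      rw [hY0, hfil, Finset.sum_empty, add_zero]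
    | succ n ih =>
      intro hn
      have hn' : n < p := hn
      have IH := ih hn'.le
      set j : Fin p := ⟨n, hn'⟩ with hj
      have hYnj : Y n j = X t j := by simp [hY, hj]
      have hHtj : H t j = Y n := by
        ext i
        rw [hH t j i]
      have hY1 : Y (n + 1) = WithLp.toLp 2 (Function.update (Y n) j (X (t+1) j)) := by
        ext i : 1
        by_cases h : i = j
        · subst h
          simp [hY, Function.update_self, hj]
        · have hij : (i : ℕ) ≠ n := by
            intro hc; exact h (Fin.ext (by simpa [hj] using hc))
          simp only [WithLp.ofLp_toLp]
          rw [Function.update_of_ne h]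
          simp only [hY]
          have h2 : (i : ℕ) < n + 1 ↔ (i : ℕ) < n := by omega
          rw [if_congr h2 rfl rfl]
      -- partial function and its gradient
      set Fj : EuclideanSpace ℝ (Fin (d j)) → ℝ :=
        fun b => f (WithLp.toLp 2 (Function.update (Y n) j b)) with hFj
      set Gj : EuclideanSpace ℝ (Fin (d j)) → EuclideanSpace ℝ (Fin (d j)) :=
        fun b => Df (WithLp.toLp 2 (Function.update (Y n) j b)) j with hGj
      have hG : ∀ b, HasGradientAt Fj (Gj b) b := fun b =>
        palm_partial_grad _ f (Y n) j (Df (WithLp.toLp 2 (Function.update (Y n) j b))) b (hDf _)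
      have hLip : ∀ a b, ‖Gj a - Gj b‖ ≤ Lc j * ‖a - b‖ := fun a b =>
        hpartialLip j (Y n) a b
      have hupd_self : WithLp.toLp 2 (Function.update (Y n) j (X t j)) = Y n := by
        rw [← hYnj, Function.update_eq_self]
      have hdesc := palm_descent Fj Gj (Lc j) hG hLip (X t j) (X (t+1) j)
      have hFx : Fj (X t j) = f (Y n) := by rw [hFj]; simp only [hupd_self]
      have hFy : Fj (X (t+1) j) = f (Y (n+1)) := by
        show f (WithLp.toLp 2 (Function.update (Y n) j (X (t+1) j))) = f (Y (n+1))
        rw [hY1]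
      have hGx : Gj (X t j) = Df (H t j) j := by
        rw [hGj]; simp only [hupd_self, hHtj]
      rw [hFx, hFy, hGx] at hdesc
      have hopt := palm_opt (g j) (hgconv j) (Df (H t j) j) (Lc j) (hLc j)
        (X t j) (X (t+1) j) (fun ξ => hupdate t j ξ)
      -- sum of g over updated point
      have hsum : ∑ i, g i (Y (n+1) i) =
          ∑ i, g i (Y n i) + (g j (X (t+1) j) - g j (X t j)) := by
        have hdiff : ∑ i, (g i (Y (n+1) i) - g i (Y n i))
            = g j (X (t+1) j) - g j (X t j) := by
          rw [Finset.sum_eq_single j]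
          · rw [hY1, WithLp.ofLp_toLp, Function.update_self, hYnj]
          · intro i _ hij
            rw [hY1, WithLp.ofLp_toLp, Function.update_of_ne hij, sub_self]
          · intro h; exact absurd (Finset.mem_univ j) h
        have := Finset.sum_sub_distrib
          (f := fun i => g i (Y (n+1) i)) (g := fun i => g i (Y n i)) (s := Finset.univ)
        linarith [this ▸ hdiff]
      -- filter insert
      have hfil : Finset.univ.filter (fun i : Fin p => (i : ℕ) < n + 1)
          = insert j (Finset.univ.filter (fun i : Fin p => (i : ℕ) < n)) := by
        ext i
        simp only [Finset.mem_filter, Finset.mem_univ, true_and, Finset.mem_insert]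
        rw [Fin.ext_iff]
        simp only [hj]
        omega
      have hjnot : j ∉ Finset.univ.filter (fun i : Fin p => (i : ℕ) < n) := by
        simp [hj]
      rw [hfil, Finset.sum_insert hjnot, hsum]
      have hcomm : ⟪Df (H t j) j, X (t+1) j - X t j⟫
          = ⟪X (t+1) j - X t j, Df (H t j) j⟫ := real_inner_comm _ _
      linarith [hdesc, hopt, IH, hcomm.le, hcomm.ge]
  have hfin := main p le_rfl
  rw [hYp] at hfin
  have hfilp : Finset.univ.filter (fun j : Fin p => (j : ℕ) < p) = Finset.univ := by
    ext i; simp [i.isLt]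
  rw [hfilp] at hfin
  -- relate norms
  have hnorm : ‖X t - X (t+1)‖ ^ 2 = ∑ i, ‖X t i - X (t+1) i‖ ^ 2 := by
    rw [PiLp.norm_sq_eq_of_L2]
    rfl
  have hle : Lmin / 2 * ‖X t - X (t+1)‖ ^ 2
      ≤ ∑ i, (Lc i / 2) * ‖X (t+1) i - X t i‖ ^ 2 := by
    rw [hnorm, Finset.mul_sum]
    apply Finset.sum_le_sum
    intro i _
    rw [norm_sub_rev]
    apply mul_le_mul_of_nonneg_right _ (sq_nonneg _)
    have := Finset.inf'_le Lc (Finset.mem_univ i)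
    linarith
  linarith [hfin, hle]
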